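/- Let X₁, X₂, … be independent real random variables with Pr{0 ≤ Xᵢ ≤ 1} = 1 and E[Xᵢ] = μᵢ for i ∈ ℕ. Define Sₙ = Σ_{i=1}^{n} Xᵢ, μ̄ₙ = (1/n) Σ_{i=1}^{n} μᵢ, and 𝒱(s, n) = n·ln(μ̄ₙ e^s + 1 − μ̄ₙ) for s ∈ ℝ, n ∈ ℕ. Let m be a positive integer with 0 < μ̄ₘ < 1 and let θ ∈ (0, 1) with θ ≠ μ̄ₘ or θ = μ̄ₘ (any θ ∈ (0,1)). Set ζ = ln( θ(1 − μ̄ₘ) / (μ̄ₘ(1 − θ)) ). Then Pr{ ∃ n ∈ ℕ, ζ(Sₙ − m θ) − 𝒱(ζ, n) + 𝒱(ζ, m) ≥ 0 } ≤ [ exp( θ·ln(μ̄ₘ/θ) + (1 − θ)·ln((1 − μ̄ₘ)/(1 − θ)) ) ]^m. -/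

import Mathlib

open MeasureTheory ProbabilityTheory


/-- First-exceedance sets. -/
def hitD (f : ℕ → Ω → ℝ) (l : ℝ) (n : ℕ) : Set Ω :=
  {ω | l ≤ f n ω ∧ ∀ k < n, f k ω < l}

/-- "Not yet exceeded up to time N". -/
def hitC (f : ℕ → Ω → ℝ) (l : ℝ) (N : ℕ) : Set Ω :=
  {ω | ∀ k ≤ N, f k ω < l}

theorem ville {Ω : Type*} [MeasurableSpace Ω] (P : Measure Ω) [IsProbabilityMeasure P]
    (f : ℕ → Ω → ℝ) (hmeas : ∀ n, Measurable (f n)) (hint : ∀ n, Integrable (f n) P)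
    (hnn : ∀ n ω, 0 ≤ f n ω) (hf0 : ∀ ω, f 0 ω = 1) (l : ℝ) (hl : 0 < l)
    (hsuper : ∀ N, ∫ ω in hitC f l N, f (N+1) ω ∂P ≤ ∫ ω in hitC f l N, f N ω ∂P) :
    P {ω | ∃ n, l ≤ f n ω} ≤ ENNReal.ofReal (1 / l) := by
  have measD : ∀ n, MeasurableSet (hitD f l n) := by
    intro n
    have : hitD f l n = {ω | l ≤ f n ω} ∩ ⋂ k, ⋂ _ : k < n, {ω | f k ω < l} := by
      ext ω; simp [hitD]
    rw [this]
    exact (measurableSet_le measurable_const (hmeas n)).inter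
      (MeasurableSet.iInter fun k => MeasurableSet.iInter fun _ =>
        measurableSet_lt (hmeas k) measurable_const)
  have measC : ∀ N, MeasurableSet (hitC f l N) := by
    intro N
    have : hitC f l N = ⋂ k, ⋂ _ : k ≤ N, {ω | f k ω < l} := by
      ext ω; simp [hitC]
    rw [this]
    exact MeasurableSet.iInter fun k => MeasurableSet.iInter fun _ =>
      measurableSet_lt (hmeas k) measurable_const
  -- the union of the D's is the event
  have hunion : {ω | ∃ n, l ≤ f n ω} = ⋃ n, hitD f l n := by
    ext ω
    simp only [Set.mem_setOf_eq, Set.mem_iUnion]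
    constructor
    · rintro h
      refine ⟨Nat.find h, Nat.find_spec h, fun k hk => ?_⟩
      exact lt_of_not_ge (Nat.find_min h hk)
    · rintro ⟨n, hn, -⟩; exact ⟨n, hn⟩
  have hdisj : Pairwise (Function.onFun Disjoint (hitD f l)) := by
    intro a b hab
    wlog h : a < b generalizing a b
    · exact (this hab.symm (hab.lt_or_gt.resolve_left h)).symm
    refine Set.disjoint_left.2 fun ω ha hb => ?_
    exact absurd ha.1 (not_le.2 (hb.2 a h))
  -- main induction
  have key : ∀ N, (∑ n ∈ Finset.range (N+1), l * (P (hitD f l n)).toReal)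
      + ∫ ω in hitC f l N, f N ω ∂P ≤ 1 := by
    intro N
    induction N with
    | zero =>
      have hC0 : hitC f l 0 = (hitD f l 0)ᶜ := by
        ext ω
        simp [hitC, hitD, Nat.le_zero, not_le]
      have h1 : l * (P (hitD f l 0)).toReal ≤ ∫ ω in hitD f l 0, f 0 ω ∂P := by
        refine setIntegral_ge_of_const_le_real (measD 0) (measure_ne_top _ _)
          (fun ω hω => hω.1) ((hint 0).integrableOn)
      have h2 : ∫ ω in hitD f l 0, f 0 ω ∂P + ∫ ω in hitC f l 0, f 0 ω ∂P = ∫ ω, f 0 ω ∂P := by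
        rw [hC0]; exact integral_add_compl (measD 0) (hint 0)
      have h3 : ∫ ω, f 0 ω ∂P = 1 := by
        rw [integral_congr_ae (ae_of_all _ fun ω => hf0 ω)]
        simp
      rw [Finset.sum_range_one]
      linarith
    | succ N ih =>
      have hsplit : hitC f l N = hitC f l (N+1) ∪ hitD f l (N+1) := by
        ext ω
        simp only [hitC, hitD, Set.mem_setOf_eq, Set.mem_union]
        constructor
        · intro h
          rcases lt_or_ge (f (N+1) ω) l with h'|h'
          · left; intro k hk
            by_cases hkN : k = N + 1
            · subst hkN; exact h'
            · exact h k (Nat.lt_succ_iff.1 (lt_of_le_of_ne hk hkN))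
          · right; exact ⟨h', fun k hk => h k (Nat.lt_succ_iff.1 hk)⟩
        · rintro (h|h) k hk
          · exact h k (le_trans hk (Nat.le_succ N))
          · exact h.2 k (Nat.lt_succ_of_le hk)
      have hdisj2 : Disjoint (hitC f l (N+1)) (hitD f l (N+1)) := by
        refine Set.disjoint_left.2 fun ω h1 h2 => ?_
        exact absurd h2.1 (not_le.2 (h1 (N+1) le_rfl))
      have hsum : ∫ ω in hitC f l N, f (N+1) ω ∂P
          = ∫ ω in hitC f l (N+1), f (N+1) ω ∂P + ∫ ω in hitD f l (N+1), f (N+1) ω ∂P := by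
        rw [hsplit]
        exact setIntegral_union hdisj2 (measD (N+1)) ((hint (N+1)).integrableOn)
          ((hint (N+1)).integrableOn)
      have hD : l * (P (hitD f l (N+1))).toReal ≤ ∫ ω in hitD f l (N+1), f (N+1) ω ∂P :=
        setIntegral_ge_of_const_le_real (measD (N+1)) (measure_ne_top _ _)
          (fun ω hω => hω.1) ((hint (N+1)).integrableOn)
      have := hsuper N
      rw [Finset.sum_range_succ]
      linarith
  -- conclude
  rw [hunion, measure_iUnion hdisj measD]
  have hbound : ∀ N, ∑ n ∈ Finset.range N, P (hitD f l n) ≤ ENNReal.ofReal (1 / l) := by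
    intro N
    have h1 : ∑ n ∈ Finset.range N, (P (hitD f l n)).toReal ≤ 1 / l := by
      have h2 := key N
      have h3 : ∫ ω in hitC f l N, f N ω ∂P ≥ 0 :=
        setIntegral_nonneg (measC N) (fun ω _ => hnn N ω)
      have h4 : ∑ n ∈ Finset.range N, l * (P (hitD f l n)).toReal
          ≤ ∑ n ∈ Finset.range (N+1), l * (P (hitD f l n)).toReal := by
        rw [Finset.sum_range_succ]
        have : 0 ≤ l * (P (hitD f l N)).toReal :=
          mul_nonneg hl.le ENNReal.toReal_nonneg
        linarith
      have h5 : l * ∑ n ∈ Finset.range N, (P (hitD f l n)).toReal ≤ 1 := by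
        rw [Finset.mul_sum]; linarith
      rw [le_div_iff₀ hl]
      linarith [h5, mul_comm l (∑ n ∈ Finset.range N, (P (hitD f l n)).toReal)]
    calc ∑ n ∈ Finset.range N, P (hitD f l n)
        = ENNReal.ofReal (∑ n ∈ Finset.range N, (P (hitD f l n)).toReal) := by
          rw [ENNReal.ofReal_sum_of_nonneg (fun _ _ => ENNReal.toReal_nonneg)]
          exact Finset.sum_congr rfl fun n _ => (ENNReal.ofReal_toReal (measure_ne_top _ _)).symm
      _ ≤ ENNReal.ofReal (1 / l) := ENNReal.ofReal_le_ofReal h1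
  rw [ENNReal.tsum_eq_iSup_sum]
  refine iSup_le fun s => ?_
  obtain ⟨N, hN⟩ := s.exists_nat_subset_range
  exact le_trans (Finset.sum_le_sum_of_subset hN) (hbound N)

/-- Uniform Hoeffding-type inequality for independent `[0,1]`-valued random variables
with means `μᵢ`: with `μ̄ₙ = (1/n) ∑_{i≤n} μᵢ`, `𝒱(s,n) = n log(μ̄ₙ eˢ + 1 - μ̄ₙ)`,
`ζ = log (θ(1-μ̄ₘ)/(μ̄ₘ(1-θ)))`, we have
`Pr{∃ n ≥ 1, ζ(Sₙ - mθ) - 𝒱(ζ,n) + 𝒱(ζ,m) ≥ 0}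
  ≤ (exp (θ log (μ̄ₘ/θ) + (1-θ) log ((1-μ̄ₘ)/(1-θ))))^m`. -/
theorem statement9 {Ω : Type*} [MeasurableSpace Ω] (P : Measure Ω) [IsProbabilityMeasure P]
    (X : ℕ → Ω → ℝ) (hXm : ∀ i, Measurable (X i))
    (hindep : iIndepFun X P)
    (hbd : ∀ i, ∀ᵐ ω ∂P, X i ω ∈ Set.Icc (0 : ℝ) 1)
    (μ : ℕ → ℝ) (hmean : ∀ i, (∫ ω, X i ω ∂P) = μ i)
    (μbar : ℕ → ℝ) (hμbar : ∀ n, μbar n = (∑ i ∈ Finset.range n, μ i) / n)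
    (V : ℝ → ℕ → ℝ)
    (hV : ∀ s n, V s n = n * Real.log (μbar n * Real.exp s + 1 - μbar n))
    (m : ℕ) (hm : 1 ≤ m) (hμm : μbar m ∈ Set.Ioo (0 : ℝ) 1)
    (θ : ℝ) (hθ : θ ∈ Set.Ioo (0 : ℝ) 1)
    (ζ : ℝ) (hζ : ζ = Real.log (θ * (1 - μbar m) / (μbar m * (1 - θ)))) :
    P {ω | ∃ n : ℕ, 1 ≤ n ∧
        0 ≤ ζ * ((∑ i ∈ Finset.range n, X i ω) - m * θ) - V ζ n + V ζ m}
      ≤ ENNReal.ofReal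
        ((Real.exp (θ * Real.log (μbar m / θ)
            + (1 - θ) * Real.log ((1 - μbar m) / (1 - θ)))) ^ m) := by
  obtain ⟨hμm0, hμm1⟩ := hμm
  obtain ⟨hθ0, hθ1⟩ := hθ
  -- truncate the random variables to be [0,1]-valued everywhere
  set φ : ℝ → ℝ := fun x => max 0 (min 1 x) with hφdef
  have hφm : Measurable φ := measurable_const.max (measurable_const.min measurable_id)
  set Y : ℕ → Ω → ℝ := fun i ω => φ (X i ω) with hYdef
  have hYm : ∀ i, Measurable (Y i) := fun i => hφm.comp (hXm i)
  have hY0 : ∀ i ω, 0 ≤ Y i ω := fun i ω => le_max_left _ _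
  have hY1 : ∀ i ω, Y i ω ≤ 1 := fun i ω => max_le zero_le_one (min_le_left _ _)
  have hYX : ∀ i, Y i =ᵐ[P] X i := by
    intro i
    filter_upwards [hbd i] with ω hω
    simp only [hYdef, hφdef]
    rw [min_eq_right hω.2, max_eq_right hω.1]
  have hYindep : iIndepFun Y P :=
    hindep.comp (fun _ => φ) (fun _ => hφm)
  have hYint : ∀ i, Integrable (Y i) P := by
    intro i
    refine (integrable_const (1:ℝ)).mono' (hYm i).aestronglyMeasurable ?_
    filter_upwards with ω
    rw [Real.norm_eq_abs, abs_le]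
    exact ⟨by linarith [hY0 i ω], hY1 i ω⟩
  have hYmean : ∀ i, ∫ ω, Y i ω ∂P = μ i := by
    intro i
    rw [integral_congr_ae (hYX i)]
    exact hmean i
  have hμ0 : ∀ i, 0 ≤ μ i := by
    intro i
    rw [← hYmean i]
    exact integral_nonneg fun ω => hY0 i ω
  have hμ1 : ∀ i, μ i ≤ 1 := by
    intro i
    rw [← hYmean i]
    calc ∫ ω, Y i ω ∂P ≤ ∫ _, (1:ℝ) ∂P := integral_mono (hYint i) (integrable_const 1)
          (fun ω => hY1 i ω)
    _ = 1 := by simp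
  -- the multiplicative factors
  set a : ℕ → ℝ := fun i => μ i * Real.exp ζ + (1 - μ i) with hadef
  have ha : ∀ i, 0 < a i := by
    intro i
    have he := Real.exp_pos ζ
    have h0 := hμ0 i; have h1 := hμ1 i
    show 0 < μ i * Real.exp ζ + (1 - μ i)
    rcases le_or_gt 1 (Real.exp ζ) with h|h
    · nlinarith
    · nlinarith
  set c : ℕ → ℝ := fun n => ∏ i ∈ Finset.range n, a i with hcdef
  have hc : ∀ n, 0 < c n := fun n => Finset.prod_pos fun i _ => ha i
  -- the supermartingale
  set T : ℕ → Ω → ℝ := fun n ω => ∑ i ∈ Finset.range n, Y i ω with hTdef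
  have hTm : ∀ n, Measurable (T n) := fun n => Finset.measurable_sum _ fun i _ => hYm i
  set f : ℕ → Ω → ℝ := fun n ω => Real.exp (ζ * T n ω) / c n with hfdef
  have hfm : ∀ n, Measurable (f n) :=
    fun n => (Real.measurable_exp.comp ((hTm n).const_mul ζ)).div_const _
  have hfnn : ∀ n ω, 0 ≤ f n ω := fun n ω => div_nonneg (Real.exp_pos _).le (hc n).le
  have hf0 : ∀ ω, f 0 ω = 1 := by
    intro ω
    simp [hfdef, hTdef, hcdef]
  have hfint : ∀ n, Integrable (f n) P := by
    intro n
    refine (integrable_const (Real.exp (|ζ| * n) / c n)).mono'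
      (hfm n).aestronglyMeasurable ?_
    filter_upwards with ω
    rw [Real.norm_eq_abs, abs_of_nonneg (hfnn n ω)]
    have hT0 : 0 ≤ T n ω := Finset.sum_nonneg fun i _ => hY0 i ω
    have hTn : T n ω ≤ n := by
      calc T n ω ≤ ∑ _ ∈ Finset.range n, (1:ℝ) :=
            Finset.sum_le_sum fun i _ => hY1 i ω
      _ = n := by simp
    have h1 : ζ * T n ω ≤ |ζ| * n := by
      calc ζ * T n ω ≤ |ζ * T n ω| := le_abs_self _
      _ = |ζ| * |T n ω| := abs_mul _ _
      _ = |ζ| * T n ω := by rw [abs_of_nonneg hT0]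
      _ ≤ |ζ| * n := by
          exact mul_le_mul_of_nonneg_left hTn (abs_nonneg ζ)
    exact div_le_div_of_nonneg_right (Real.exp_le_exp.2 h1) (hc n).le
  -- mean of the exponential factor
  have hEexp : ∀ i, ∫ ω, Real.exp (ζ * Y i ω) ∂P ≤ a i := by
    intro i
    have hpt : ∀ ω, Real.exp (ζ * Y i ω) ≤ Y i ω * Real.exp ζ + (1 - Y i ω) := by
      intro ω
      have h := convexOn_exp.2 (Set.mem_univ ζ) (Set.mem_univ (0:ℝ))
        (hY0 i ω) (show (0:ℝ) ≤ 1 - Y i ω by linarith [hY1 i ω]) (by ring)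
      simp only [smul_eq_mul, mul_zero, add_zero, Real.exp_zero, mul_one] at h
      calc Real.exp (ζ * Y i ω) = Real.exp (Y i ω * ζ) := by rw [mul_comm]
      _ ≤ Y i ω * Real.exp ζ + (1 - Y i ω) := h
    have hint1 : Integrable (fun ω => Real.exp (ζ * Y i ω)) P := by
      refine (integrable_const (Real.exp |ζ|)).mono'
        ((Real.measurable_exp.comp ((hYm i).const_mul ζ)).aestronglyMeasurable) ?_
      filter_upwards with ω
      rw [Real.norm_eq_abs, abs_of_pos (Real.exp_pos _), Real.exp_le_exp]
      calc ζ * Y i ω ≤ |ζ * Y i ω| := le_abs_self _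
      _ = |ζ| * |Y i ω| := abs_mul _ _
      _ ≤ |ζ| * 1 := by
          refine mul_le_mul_of_nonneg_left ?_ (abs_nonneg ζ)
          rw [abs_of_nonneg (hY0 i ω)]; exact hY1 i ω
      _ = |ζ| := mul_one _
    have hint2 : Integrable (fun ω => Y i ω * Real.exp ζ + (1 - Y i ω)) P :=
      ((hYint i).mul_const _).add ((integrable_const 1).sub (hYint i))
    calc ∫ ω, Real.exp (ζ * Y i ω) ∂P
        ≤ ∫ ω, (Y i ω * Real.exp ζ + (1 - Y i ω)) ∂P := integral_mono hint1 hint2 hpt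
    _ = (∫ ω, Y i ω ∂P) * Real.exp ζ + (1 - ∫ ω, Y i ω ∂P) := by
        have hg : Integrable (fun ω => 1 - Y i ω) P := (integrable_const 1).sub (hYint i)
        have hf' : Integrable (fun ω => Y i ω * Real.exp ζ) P := (hYint i).mul_const _
        rw [integral_add hf' hg, integral_mul_const,
          integral_sub (integrable_const 1) (hYint i)]
        simp
    _ = a i := by rw [hYmean i]
  -- AM-GM: the product is at most exp (V ζ n)
  have hcle : ∀ n, 1 ≤ n → c n ≤ Real.exp (V ζ n) := by
    intro n hn
    have hn0 : (0:ℝ) < n := by exact_mod_cast hn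
    set t : ℝ := μbar n * Real.exp ζ + 1 - μbar n with htdef
    have hsuma : ∑ i ∈ Finset.range n, a i = n * t := by
      simp only [hadef, htdef, hμbar n]
      rw [Finset.sum_add_distrib, ← Finset.sum_mul, Finset.sum_sub_distrib]
      simp only [Finset.sum_const, Finset.card_range, nsmul_eq_mul, mul_one]
      field_simp
      ring
    have ht : 0 < t := by
      have : 0 < ∑ i ∈ Finset.range n, a i :=
        Finset.sum_pos (fun i _ => ha i) (Finset.nonempty_range_iff.2 (by omega))
      rw [hsuma] at this
      by_contra h
      push_neg at h
      nlinarith [mul_nonpos_of_nonneg_of_nonpos hn0.le h]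
    have hVt : Real.exp (V ζ n) = t ^ n := by
      rw [hV]
      rw [show μbar n * Real.exp ζ + 1 - μbar n = t from rfl, Real.exp_nat_mul,
        Real.exp_log ht]
    have hamgm : c n ≤ t ^ n := by
      have hw := Real.geom_mean_le_arith_mean_weighted (Finset.range n)
        (fun _ => (n:ℝ)⁻¹) a (fun i _ => by positivity)
        (by simp [Finset.sum_const, Finset.card_range]; field_simp)
        (fun i _ => (ha i).le)
      have hsum' : ∑ i ∈ Finset.range n, (n:ℝ)⁻¹ * a i = t := by
        rw [← Finset.mul_sum, hsuma]
        field_simp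
      rw [hsum'] at hw
      have hpow := pow_le_pow_left₀ (Finset.prod_nonneg fun i _ =>
        Real.rpow_nonneg (ha i).le _) hw n
      rw [← Finset.prod_pow] at hpow
      have heq : ∀ i ∈ Finset.range n, (a i ^ ((n:ℝ)⁻¹)) ^ n = a i := by
        intro i _
        rw [← Real.rpow_natCast (a i ^ ((n:ℝ)⁻¹)) n, ← Real.rpow_mul (ha i).le,
          inv_mul_cancel₀ (ne_of_gt hn0), Real.rpow_one]
      rw [Finset.prod_congr rfl heq] at hpow
      exact hpow
    rw [hVt]
    exact hamgm
  -- threshold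
  set l : ℝ := Real.exp (m * θ * ζ - V ζ m) with hldef
  have hl : 0 < l := Real.exp_pos _
  -- supermartingale property in the integrated form needed by `ville`
  have hsuper : ∀ N, ∫ ω in hitC f l N, f (N+1) ω ∂P ≤ ∫ ω in hitC f l N, f N ω ∂P := by
    intro N
    set s : Set Ω := hitC f l N with hsdef
    have hseq : s = ⋂ k, ⋂ _ : k ≤ N, {ω | f k ω < l} := by
      ext ω; simp [hsdef, hitC]
    have hsm : MeasurableSet s := by
      rw [hseq]
      exact MeasurableSet.iInter fun k => MeasurableSet.iInter fun _ =>
        measurableSet_lt (hfm k) measurable_const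
    set G : Ω → ℝ := fun ω => Real.exp (ζ * Y N ω) / a N with hGdef
    have hGm : Measurable G := (Real.measurable_exp.comp ((hYm N).const_mul ζ)).div_const _
    have hGnn : ∀ ω, 0 ≤ G ω := fun ω => div_nonneg (Real.exp_pos _).le (ha N).le
    have hfact : ∀ ω, f (N+1) ω = f N ω * G ω := by
      intro ω
      show Real.exp (ζ * T (N+1) ω) / c (N+1) = _
      have h1 : T (N+1) ω = T N ω + Y N ω := Finset.sum_range_succ _ _
      have h2 : c (N+1) = c N * a N := Finset.prod_range_succ _ _
      rw [h1, h2, mul_add, Real.exp_add]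
      show _ = Real.exp (ζ * T N ω) / c N * (Real.exp (ζ * Y N ω) / a N)
      field_simp
    set Z : Ω → ℝ := s.indicator (f N) with hZdef
    have hZm : Measurable Z := (hfm N).indicator hsm
    have hZnn : ∀ ω, 0 ≤ Z ω := fun ω => Set.indicator_nonneg (fun ω _ => hfnn N ω) ω
    have hindZG : IndepFun Z G P := by
      set W : Ω → (↥(Finset.range N) → ℝ) := fun ω i => Y i ω with hWdef
      set W' : Ω → (↥({N} : Finset ℕ) → ℝ) := fun ω i => Y i ω with hW'def
      have hvec : IndepFun W W' P :=
        hYindep.indepFun_finset (Finset.range N) {N}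
          (Finset.disjoint_singleton_right.2 (by simp)) hYm
      rw [IndepFun_iff_Indep] at hvec ⊢
      refine indep_of_indep_of_le_left (indep_of_indep_of_le_right hvec ?_) ?_
      · -- comap G ≤ comap W'
        refine Measurable.comap_le (?_ : Measurable[MeasurableSpace.comap W' MeasurableSpace.pi] G)
        have hYN : Measurable[MeasurableSpace.comap W' MeasurableSpace.pi] (Y N) := by
          have hYeq : Y N = (fun v : ↥({N} : Finset ℕ) → ℝ =>
              v ⟨N, Finset.mem_singleton_self N⟩) ∘ W' := rfl
          rw [hYeq]
          exact (measurable_pi_apply _).comp (Measurable.of_comap_le le_rfl)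
        exact (Real.measurable_exp.comp (hYN.const_mul ζ)).div_const _
      · -- comap Z ≤ comap W
        refine Measurable.comap_le (?_ : Measurable[MeasurableSpace.comap W MeasurableSpace.pi] Z)
        have hYi : ∀ i, i < N → Measurable[MeasurableSpace.comap W MeasurableSpace.pi] (Y i) := by
          intro i hi
          have hYeq : Y i = (fun v : ↥(Finset.range N) → ℝ =>
              v ⟨i, Finset.mem_range.2 hi⟩) ∘ W := rfl
          rw [hYeq]
          exact (measurable_pi_apply _).comp (Measurable.of_comap_le le_rfl)
        have hfk : ∀ k, k ≤ N → Measurable[MeasurableSpace.comap W MeasurableSpace.pi] (f k) := by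
          intro k hk
          have hTk : Measurable[MeasurableSpace.comap W MeasurableSpace.pi] (T k) :=
            Finset.measurable_sum _ fun i hi =>
              hYi i (lt_of_lt_of_le (Finset.mem_range.1 hi) hk)
          exact (Real.measurable_exp.comp (hTk.const_mul ζ)).div_const _
        have hsm' : MeasurableSet[MeasurableSpace.comap W MeasurableSpace.pi] s := by
          rw [hseq]
          exact MeasurableSet.iInter fun k => MeasurableSet.iInter fun hk =>
            measurableSet_lt (hfk k hk) measurable_const
        exact (hfk N le_rfl).indicator hsm'
    have hGint : ∫ ω, G ω ∂P ≤ 1 := by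
      have : ∫ ω, G ω ∂P = (∫ ω, Real.exp (ζ * Y N ω) ∂P) / a N := integral_div _ _
      rw [this, div_le_one (ha N)]
      exact hEexp N
    have hGnn' : 0 ≤ ∫ ω, G ω ∂P := integral_nonneg hGnn
    have hZnn' : 0 ≤ ∫ ω, Z ω ∂P := integral_nonneg hZnn
    have hmul : ∫ ω, (Z * G) ω ∂P = (∫ ω, Z ω ∂P) * ∫ ω, G ω ∂P :=
      hindZG.integral_mul_eq_mul_integral hZm.aestronglyMeasurable hGm.aestronglyMeasurable
    calc ∫ ω in s, f (N+1) ω ∂P = ∫ ω, s.indicator (f (N+1)) ω ∂P :=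
          (integral_indicator hsm).symm
    _ = ∫ ω, (Z * G) ω ∂P := by
        refine integral_congr_ae (ae_of_all _ fun ω => ?_)
        rw [Pi.mul_apply, hZdef]
        by_cases hω : ω ∈ s
        · rw [Set.indicator_of_mem hω, Set.indicator_of_mem hω, hfact ω]
        · rw [Set.indicator_of_notMem hω, Set.indicator_of_notMem hω, zero_mul]
    _ = (∫ ω, Z ω ∂P) * ∫ ω, G ω ∂P := hmul
    _ ≤ (∫ ω, Z ω ∂P) * 1 := mul_le_mul_of_nonneg_left hGint hZnn'
    _ = ∫ ω in s, f N ω ∂P := by rw [mul_one, hZdef, integral_indicator hsm]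
  have hville := ville P f hfm hfint hfnn hf0 l hl hsuper
  -- pass from X to Y on the event
  have hbad : P {ω | ¬ ∀ i, X i ω = Y i ω} = 0 := by
    have hsub : {ω | ¬ ∀ i, X i ω = Y i ω} ⊆ ⋃ i, {ω | ¬ X i ω = Y i ω} := by
      intro ω hω
      push_neg at hω
      obtain ⟨i, hi⟩ := hω
      exact Set.mem_iUnion.2 ⟨i, hi⟩
    refine measure_mono_null hsub (measure_iUnion_null fun i => ?_)
    exact ae_iff.mp (hYX i).symm
  have hsubset : {ω | ∃ n : ℕ, 1 ≤ n ∧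
        0 ≤ ζ * ((∑ i ∈ Finset.range n, X i ω) - m * θ) - V ζ n + V ζ m}
      ⊆ {ω | ∃ n, l ≤ f n ω} ∪ {ω | ¬ ∀ i, X i ω = Y i ω} := by
    intro ω hω
    by_cases hg : ∀ i, X i ω = Y i ω
    · left
      obtain ⟨n, hn1, hn⟩ := hω
      refine ⟨n, ?_⟩
      have hS : (∑ i ∈ Finset.range n, X i ω) = T n ω :=
        Finset.sum_congr rfl fun i _ => hg i
      rw [hS] at hn
      have h1 : l ≤ Real.exp (ζ * T n ω - V ζ n) := by
        rw [hldef, Real.exp_le_exp]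
        nlinarith [hn]
      calc l ≤ Real.exp (ζ * T n ω - V ζ n) := h1
      _ = Real.exp (ζ * T n ω) / Real.exp (V ζ n) := Real.exp_sub _ _
      _ ≤ Real.exp (ζ * T n ω) / c n :=
          div_le_div_of_nonneg_left (Real.exp_pos _).le (hc n) (hcle n hn1)
      _ = f n ω := rfl
    · right; exact hg
  -- the final arithmetic identity
  have h1μ : (0:ℝ) < 1 - μbar m := by linarith
  have h1θ : (0:ℝ) < 1 - θ := by linarith
  have harg : (0:ℝ) < θ * (1 - μbar m) / (μbar m * (1 - θ)) :=
    div_pos (mul_pos hθ0 h1μ) (mul_pos hμm0 h1θ)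
  have hexpζ : Real.exp ζ = θ * (1 - μbar m) / (μbar m * (1 - θ)) := by
    rw [hζ, Real.exp_log harg]
  have hζ' : ζ = Real.log θ + Real.log (1 - μbar m)
      - (Real.log (μbar m) + Real.log (1 - θ)) := by
    rw [hζ, Real.log_div (mul_pos hθ0 h1μ).ne' (mul_pos hμm0 h1θ).ne',
      Real.log_mul hθ0.ne' h1μ.ne', Real.log_mul hμm0.ne' h1θ.ne']
  have hμe : μbar m * Real.exp ζ + 1 - μbar m = (1 - μbar m) / (1 - θ) := by
    rw [hexpζ]
    field_simp
    ring
  have hVm : V ζ m = m * (Real.log (1 - μbar m) - Real.log (1 - θ)) := by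
    rw [hV, hμe, Real.log_div h1μ.ne' h1θ.ne']
  have hkey : (Real.exp (θ * Real.log (μbar m / θ)
      + (1 - θ) * Real.log ((1 - μbar m) / (1 - θ)))) ^ m = 1 / l := by
    rw [← Real.exp_nat_mul, hldef, one_div, ← Real.exp_neg]
    congr 1
    rw [Real.log_div hμm0.ne' hθ0.ne', Real.log_div h1μ.ne' h1θ.ne', hVm, hζ']
    ring
  calc P {ω | ∃ n : ℕ, 1 ≤ n ∧
        0 ≤ ζ * ((∑ i ∈ Finset.range n, X i ω) - m * θ) - V ζ n + V ζ m}
      ≤ P ({ω | ∃ n, l ≤ f n ω} ∪ {ω | ¬ ∀ i, X i ω = Y i ω}) := measure_mono hsubset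
  _ ≤ P {ω | ∃ n, l ≤ f n ω} + P {ω | ¬ ∀ i, X i ω = Y i ω} := measure_union_le _ _
  _ = P {ω | ∃ n, l ≤ f n ω} := by rw [hbad, add_zero]
  _ ≤ ENNReal.ofReal (1 / l) := hville
  _ = ENNReal.ofReal ((Real.exp (θ * Real.log (μbar m / θ)
      + (1 - θ) * Real.log ((1 - μbar m) / (1 - θ)))) ^ m) := by rw [hkey]
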